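/- With Q, I, J as above, there is an isomorphism of Q-modules (I + J)/I ≅ J/(zJ). -/

import Mathlib

/-- Variables of the polynomial ring `Q = k[z, x_1,…,x_n, y_{i,j}]`. -/
inductive TreeVar (n : ℕ) (a : Fin n → ℕ) : Type
  | z : TreeVar n a
  | x : Fin n → TreeVar n a
  | y : (i : Fin n) → Fin (a i) → TreeVar n a

open MvPolynomial

section Aux

variable {k : Type*} [Field k] {n : ℕ} {a : Fin n → ℕ}

private lemma X_mul_X_eq (s t : TreeVar n a) :
    (X s * X t : MvPolynomial (TreeVar n a) k) =
      monomial (Finsupp.single s 1 + Finsupp.single t 1) 1 := by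
  rw [X, X, monomial_mul, one_mul]

private lemma X_mul_X_mul_X_eq (s t u : TreeVar n a) :
    (X s * (X t * X u) : MvPolynomial (TreeVar n a) k) =
      monomial (Finsupp.single s 1 + (Finsupp.single t 1 + Finsupp.single u 1)) 1 := by
  rw [X, X, X, monomial_mul, monomial_mul, one_mul, one_mul]

end Aux

/-- with `I = (z x_1, …, z x_n)` and `J = (x_i y_{i,j})`,
there is a `Q`-module isomorphism `(I + J)/I ≅ J/(zJ)`. -/
theorem stmt2 {k : Type*} [Field k] (n : ℕ) (hn : 0 < n) (a : Fin n → ℕ)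
    (I J : Ideal (MvPolynomial (TreeVar n a) k))
    (hI : I = Ideal.span (Set.range fun i : Fin n =>
      X (TreeVar.z : TreeVar n a) * X (TreeVar.x i)))
    (hJ : J = Ideal.span {p | ∃ (i : Fin n) (j : Fin (a i)),
      p = X (TreeVar.x i : TreeVar n a) * X (TreeVar.y i j)}) :
    Nonempty (
      (↥(I ⊔ J) ⧸ (Submodule.comap (Submodule.subtype (I ⊔ J)) I))
        ≃ₗ[MvPolynomial (TreeVar n a) k]
      (↥J ⧸ (Submodule.comap (Submodule.subtype J)
        (Ideal.span {X (TreeVar.z : TreeVar n a)} * J)))) := by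
  classical
  -- exponent vectors
  set mI : Fin n → (TreeVar n a →₀ ℕ) := fun i =>
    Finsupp.single TreeVar.z 1 + Finsupp.single (TreeVar.x i) 1 with hmI
  set SJ : Set (TreeVar n a →₀ ℕ) :=
    {s | ∃ (i : Fin n) (j : Fin (a i)),
      s = Finsupp.single (TreeVar.x i) 1 + Finsupp.single (TreeVar.y i j) 1} with hSJ
  set SK : Set (TreeVar n a →₀ ℕ) :=
    {s | ∃ (i : Fin n) (j : Fin (a i)),
      s = Finsupp.single (TreeVar.z : TreeVar n a) 1 +
        (Finsupp.single (TreeVar.x i) 1 + Finsupp.single (TreeVar.y i j) 1)} with hSK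
  have hI' : I = Ideal.span ((fun s => monomial s (1 : k)) '' Set.range mI) := by
    rw [hI]
    congr 1
    ext p
    constructor
    · rintro ⟨i, rfl⟩
      exact ⟨_, ⟨i, rfl⟩, (X_mul_X_eq _ _).symm⟩
    · rintro ⟨s, ⟨i, rfl⟩, rfl⟩
      exact ⟨i, X_mul_X_eq _ _⟩
  have hJ' : J = Ideal.span ((fun s => monomial s (1 : k)) '' SJ) := by
    rw [hJ]
    congr 1
    ext p
    constructor
    · rintro ⟨i, j, rfl⟩
      exact ⟨_, ⟨i, j, rfl⟩, (X_mul_X_eq _ _).symm⟩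
    · rintro ⟨s, ⟨i, j, rfl⟩, rfl⟩
      exact ⟨i, j, (X_mul_X_eq _ _).symm⟩
  -- zJ as a monomial ideal
  have hzJ : Ideal.span {X (TreeVar.z : TreeVar n a)} * J =
      Ideal.span ((fun s => monomial s (1 : k)) '' SK) := by
    rw [hJ, Ideal.span_mul_span']
    congr 1
    ext p
    constructor
    · rintro ⟨q, hq, r, ⟨i, j, rfl⟩, rfl⟩
      simp only [Set.mem_singleton_iff] at hq
      subst hq
      exact ⟨_, ⟨i, j, rfl⟩, (X_mul_X_mul_X_eq _ _ _).symm⟩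
    · rintro ⟨s, ⟨i, j, rfl⟩, rfl⟩
      exact ⟨_, rfl, _, ⟨i, j, rfl⟩, (X_mul_X_mul_X_eq _ _ _)⟩
  -- the key equality J ⊓ I = zJ
  have key : J ⊓ I = Ideal.span {X (TreeVar.z : TreeVar n a)} * J := by
    apply le_antisymm
    · rw [hzJ, hI', hJ']
      intro f hf
      rw [Submodule.mem_inf] at hf
      obtain ⟨hfJ, hfI⟩ := hf
      rw [mem_ideal_span_monomial_image] at hfJ hfI ⊢
      intro m hm
      obtain ⟨sJ, ⟨i, j, rfl⟩, hle1⟩ := hfJ m hm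
      obtain ⟨sI, ⟨i', rfl⟩, hle2⟩ := hfI m hm
      refine ⟨_, ⟨i, j, rfl⟩, ?_⟩
      intro v
      have h1 := hle1 v
      have h2 := hle2 v
      simp only [Finsupp.add_apply, Finsupp.single_apply, hmI] at h1 h2 ⊢
      cases v with
      | z => simpa using le_trans (by simp) h2
      | x i'' => simpa using le_trans (by simp) h1
      | y i'' j'' => simpa using le_trans (by simp) h1
    · apply le_inf
      · exact Ideal.mul_le_right
      · rw [hJ, Ideal.span_mul_span', hI]
        rw [Ideal.span_le]
        rintro p ⟨q, hq, r, ⟨i, j, rfl⟩, rfl⟩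
        simp only [Set.mem_singleton_iff] at hq
        subst hq
        have : X (TreeVar.z : TreeVar n a) * (X (TreeVar.x i) * X (TreeVar.y i j))
            = ((X TreeVar.z * X (TreeVar.x i)) * X (TreeVar.y i j) : MvPolynomial (TreeVar n a) k) := by ring
        show X (TreeVar.z : TreeVar n a) * (X (TreeVar.x i) * X (TreeVar.y i j)) ∈ _
        rw [this]
        exact Ideal.mul_mem_right _ _ (Ideal.subset_span ⟨i, rfl⟩)
  have hsup : J ⊔ I = I ⊔ J := sup_comm J I
  refine ⟨?_⟩
  have e := (LinearMap.quotientInfEquivSupQuotient J I).symm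
  rw [← Submodule.comap_inf, key, hsup] at e
  exact e
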